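/- Let ε < 1 be a real number and define f(s) = (1 − e^{−2(1−ε)s})/((1 − e^{−s})·(1 − e^{−(1−ε)s})³) for s > 0. Then f has Hilbert-series Laurent coefficients (2/(1−ε)², (2−ε)/(1−ε)²) of order 3 at s = 0; i.e., s³·f(s) → 2/(1−ε)² and s²·(f(s) − 2/((1−ε)² s³)) → (2−ε)/(1−ε)² as s → 0⁺. -/

import Mathlib

set_option maxHeartbeats 1000000

open Filter Real Set

/-- `(1 - e^{-x})/x`, the basic building block of the regularized Hilbert series. -/
noncomputable def gg (x : ℝ) : ℝ := (1 - Real.exp (-x)) / x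

/-- `(gg x - 1)/x`, capturing the second-order behaviour of `gg` at `0`. -/
noncomputable def hh (x : ℝ) : ℝ := (gg x - 1) / x

lemma tendsto_gg : Tendsto gg (nhdsWithin 0 (Set.Ioi 0)) (nhds 1) := by
  have := HasDerivAt.lhopital_zero_nhdsGT (a := (0:ℝ))
    (f := fun x => 1 - Real.exp (-x)) (f' := fun x => Real.exp (-x))
    (g := fun x => x) (g' := fun _ => 1) ?_ ?_ ?_ ?_ ?_ (l := nhds 1) ?_
  · exact this.congr fun x => rfl
  · filter_upwards with x
    have h1 : HasDerivAt (fun x : ℝ => Real.exp (-x)) (-Real.exp (-x)) x := by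
      simpa [Function.comp_def] using (Real.hasDerivAt_exp (-x)).comp x (hasDerivAt_neg x)
    simpa [Pi.sub_def] using (hasDerivAt_const x (1:ℝ)).sub h1
  · filter_upwards with x; exact hasDerivAt_id x
  · filter_upwards with x; norm_num
  · have : Tendsto (fun x : ℝ => 1 - Real.exp (-x)) (nhds 0) (nhds 0) := by
      have := (Real.continuous_exp.comp continuous_neg).tendsto (0:ℝ)
      simpa using (tendsto_const_nhds (x := (1:ℝ))).sub this
    exact this.mono_left nhdsWithin_le_nhds
  · exact tendsto_id.mono_left nhdsWithin_le_nhds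
  · simp only [div_one]
    have := (Real.continuous_exp.comp continuous_neg).tendsto (0:ℝ)
    simpa [Function.comp_def] using this.mono_left nhdsWithin_le_nhds

lemma tendsto_hh : Tendsto hh (nhdsWithin 0 (Set.Ioi 0)) (nhds (-(1/2))) := by
  have hd1 : ∀ x : ℝ, HasDerivAt (fun x : ℝ => Real.exp (-x)) (-Real.exp (-x)) x := by
    intro x
    simpa [Function.comp_def] using (Real.hasDerivAt_exp (-x)).comp x (hasDerivAt_neg x)
  have inner : Tendsto (fun x : ℝ => (Real.exp (-x) - 1) / (2 * x))
      (nhdsWithin 0 (Set.Ioi 0)) (nhds (-(1/2))) := by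
    apply HasDerivAt.lhopital_zero_nhdsGT
      (f' := fun x => -Real.exp (-x)) (g' := fun _ => (2:ℝ))
    · filter_upwards with x; simpa [Pi.sub_def] using (hd1 x).sub (hasDerivAt_const x (1:ℝ))
    · filter_upwards with x; simpa using (hasDerivAt_id x).const_mul (2:ℝ)
    · filter_upwards with x; norm_num
    · have := (Real.continuous_exp.comp continuous_neg).tendsto (0:ℝ)
      have h2 : Tendsto (fun x : ℝ => Real.exp (-x) - 1) (nhds 0) (nhds 0) := by
        simpa using this.sub (tendsto_const_nhds (x := (1:ℝ)))
      exact h2.mono_left nhdsWithin_le_nhds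
    · have h4 : Tendsto (fun x : ℝ => 2 * x) (nhds (0:ℝ)) (nhds 0) := by
        simpa [Pi.mul_def] using ((continuous_const.mul continuous_id).tendsto (0:ℝ))
      exact h4.mono_left nhdsWithin_le_nhds
    · have := (Real.continuous_exp.comp continuous_neg).tendsto (0:ℝ)
      have h3 := this.neg.div_const (2:ℝ)
      have h5 : Tendsto (fun x : ℝ => -Real.exp (-x) / 2) (nhds 0) (nhds (-(1/2))) := by
        convert h3 using 2
        all_goals norm_num [Function.comp_def]
      exact h5.mono_left nhdsWithin_le_nhds
  have main : Tendsto (fun x : ℝ => (1 - Real.exp (-x) - x) / x ^ 2)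
      (nhdsWithin 0 (Set.Ioi 0)) (nhds (-(1/2))) := by
    apply HasDerivAt.lhopital_zero_nhdsGT
      (f' := fun x => Real.exp (-x) - 1) (g' := fun x => 2 * x)
    · filter_upwards with x
      have := ((hasDerivAt_const x (1:ℝ)).sub (hd1 x)).sub (hasDerivAt_id x)
      exact (this : HasDerivAt (fun y => 1 - Real.exp (-y) - y) _ x).congr_deriv (by ring)
    · filter_upwards with x; simpa using (hasDerivAt_pow 2 x)
    · filter_upwards [self_mem_nhdsWithin] with x (hx : 0 < x); positivity
    · have := (Real.continuous_exp.comp continuous_neg).tendsto (0:ℝ)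
      have h2 : Tendsto (fun x : ℝ => 1 - Real.exp (-x) - x) (nhds 0) (nhds 0) := by
        have := ((tendsto_const_nhds (x := (1:ℝ))).sub this).sub (tendsto_id (α := ℝ))
        simpa using this
      exact h2.mono_left nhdsWithin_le_nhds
    · have : Tendsto (fun x : ℝ => x ^ 2) (nhds (0:ℝ)) (nhds 0) := by
        simpa using (continuous_pow 2).tendsto (0:ℝ)
      exact this.mono_left nhdsWithin_le_nhds
    · exact inner
  refine main.congr' ?_
  filter_upwards [self_mem_nhdsWithin] with x (hx : 0 < x)
  rw [hh, gg, div_sub_one hx.ne', div_div, sq]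

lemma tendsto_mul_pos {k : ℝ} (hk : 0 < k) :
    Tendsto (fun s : ℝ => k * s) (nhdsWithin 0 (Set.Ioi 0)) (nhdsWithin 0 (Set.Ioi 0)) := by
  rw [tendsto_nhdsWithin_iff]
  constructor
  · have : Tendsto (fun s : ℝ => k * s) (nhds 0) (nhds (k * 0)) :=
      (continuous_const.mul continuous_id).tendsto 0
    rw [mul_zero] at this
    exact this.mono_left nhdsWithin_le_nhds
  · filter_upwards [self_mem_nhdsWithin] with s (hs : 0 < s)
    exact mul_pos hk hs

/-- `f` has Hilbert-series Laurent coefficients `(a₀, a₁)` of order `n` at `s = 0`: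
`sⁿ·f(s) → a₀` and `sⁿ⁻¹·(f(s) − a₀/sⁿ) → a₁` as `s → 0⁺`. -/
def HSLaurentCoeffs (f : ℝ → ℝ) (n : ℕ) (a₀ a₁ : ℝ) : Prop :=
  Filter.Tendsto (fun s => s ^ n * f s) (nhdsWithin 0 (Set.Ioi 0)) (nhds a₀) ∧
  Filter.Tendsto (fun s => s ^ (n - 1) * (f s - a₀ / s ^ n))
    (nhdsWithin 0 (Set.Ioi 0)) (nhds a₁)

/-- The regularized Hilbert series of the conifold under the test symmetry `(−1,−1,−1,0)`,
`f(s) = (1 − e^{−2(1−ε)s})/((1 − e^{−s})(1 − e^{−(1−ε)s})³)`, has Laurent coefficients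
`(2/(1−ε)², (2−ε)/(1−ε)²)` of order 3. -/
theorem conifold_regularized_hs_coeffs (ε : ℝ) (hε : ε < 1) :
    HSLaurentCoeffs
      (fun s => (1 - Real.exp (-(2 * (1 - ε) * s)))
        / ((1 - Real.exp (-s)) * (1 - Real.exp (-((1 - ε) * s))) ^ 3))
      3 (2 / (1 - ε) ^ 2) ((2 - ε) / (1 - ε) ^ 2) := by
  have hc : (0:ℝ) < 1 - ε := by linarith
  have hg2 : Tendsto (fun s : ℝ => gg ((1 - ε) * s)) (nhdsWithin 0 (Set.Ioi 0)) (nhds 1) :=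
    tendsto_gg.comp (tendsto_mul_pos hc)
  have hg3 : Tendsto (fun s : ℝ => gg (2 * (1 - ε) * s)) (nhdsWithin 0 (Set.Ioi 0)) (nhds 1) :=
    tendsto_gg.comp (tendsto_mul_pos (by linarith))
  have hh1 := tendsto_hh
  have hh2 : Tendsto (fun s : ℝ => hh ((1 - ε) * s)) (nhdsWithin 0 (Set.Ioi 0)) (nhds (-(1/2))) :=
    tendsto_hh.comp (tendsto_mul_pos hc)
  have hh3 : Tendsto (fun s : ℝ => hh (2 * (1 - ε) * s))
      (nhdsWithin 0 (Set.Ioi 0)) (nhds (-(1/2))) :=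
    tendsto_hh.comp (tendsto_mul_pos (by linarith))
  constructor
  · -- leading coefficient
    show Tendsto (fun s : ℝ => s ^ 3 * ((1 - Real.exp (-(2 * (1 - ε) * s)))
        / ((1 - Real.exp (-s)) * (1 - Real.exp (-((1 - ε) * s))) ^ 3)))
      (nhdsWithin 0 (Set.Ioi 0)) (nhds (2 / (1 - ε) ^ 2))
    have hR : Tendsto (fun s : ℝ => 2 / (1 - ε) ^ 2 * gg (2 * (1 - ε) * s)
        / (gg s * gg ((1 - ε) * s) ^ 3)) (nhdsWithin 0 (Set.Ioi 0))
        (nhds (2 / (1 - ε) ^ 2 * 1 / (1 * 1 ^ 3))) :=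
      (tendsto_const_nhds.mul hg3).div (tendsto_gg.mul (hg2.pow 3)) (by norm_num)
    rw [show (2 / (1 - ε) ^ 2 * 1 / (1 * 1 ^ 3) : ℝ) = 2 / (1 - ε) ^ 2 by norm_num] at hR
    refine hR.congr' ?_
    filter_upwards [self_mem_nhdsWithin] with s (hs : 0 < s)
    have h1 : (0:ℝ) < 1 - Real.exp (-s) := by
      have := Real.exp_lt_one_iff.mpr (neg_lt_zero.mpr hs); linarith
    have h2 : (0:ℝ) < 1 - Real.exp (-((1 - ε) * s)) := by
      have := Real.exp_lt_one_iff.mpr (neg_lt_zero.mpr (mul_pos hc hs)); linarith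
    simp only [gg]
    field_simp
  · -- subleading coefficient
    show Tendsto (fun s : ℝ => s ^ (3 - 1) * ((1 - Real.exp (-(2 * (1 - ε) * s)))
        / ((1 - Real.exp (-s)) * (1 - Real.exp (-((1 - ε) * s))) ^ 3)
        - (2 / (1 - ε) ^ 2) / s ^ 3))
      (nhdsWithin 0 (Set.Ioi 0)) (nhds ((2 - ε) / (1 - ε) ^ 2))
    set c : ℝ := 1 - ε with hcdef
    have hs0 : Tendsto (fun s : ℝ => s) (nhdsWithin 0 (Set.Ioi 0)) (nhds 0) :=
      tendsto_id.mono_left nhdsWithin_le_nhds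
    set F : ℝ → ℝ := fun s => 2*c*hh (2*c*s) - hh s - 3*c*hh (c*s)
        - s*(3*c^2*(hh (c*s))^2 + 3*c*((hh s)*(hh (c*s))))
        - s^2*(c^3*(hh (c*s))^3 + 3*c^2*((hh s)*(hh (c*s))^2))
        - s^3*(c^3*((hh s)*(hh (c*s))^3)) with hFdef
    have hF : Tendsto F (nhdsWithin 0 (Set.Ioi 0))
        (nhds (2*c*(-(1/2)) - (-(1/2)) - 3*c*(-(1/2))
          - 0*(3*c^2*(-(1/2):ℝ)^2 + 3*c*((-(1/2):ℝ)*(-(1/2))))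
          - 0^2*(c^3*(-(1/2):ℝ)^3 + 3*c^2*((-(1/2):ℝ)*(-(1/2))^2))
          - 0^3*(c^3*((-(1/2):ℝ)*(-(1/2))^3)))) := by
      refine Tendsto.sub (Tendsto.sub (Tendsto.sub (Tendsto.sub (Tendsto.sub ?_ ?_) ?_) ?_) ?_) ?_
      · exact tendsto_const_nhds.mul hh3
      · exact hh1
      · exact tendsto_const_nhds.mul hh2
      · exact hs0.mul ((tendsto_const_nhds.mul (hh2.pow 2)).add
          (tendsto_const_nhds.mul (hh1.mul hh2)))
      · exact (hs0.pow 2).mul ((tendsto_const_nhds.mul (hh2.pow 3)).add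
          (tendsto_const_nhds.mul (hh1.mul (hh2.pow 2))))
      · exact (hs0.pow 3).mul (tendsto_const_nhds.mul (hh1.mul (hh2.pow 3)))
    have hR : Tendsto (fun s : ℝ => 2 / c ^ 2 * F s / (gg s * gg (c * s) ^ 3))
        (nhdsWithin 0 (Set.Ioi 0)) (nhds ((2 - ε) / c ^ 2)) := by
      have hconst : Tendsto (fun _ : ℝ => 2 / c ^ 2) (nhdsWithin 0 (Set.Ioi 0))
          (nhds (2 / c ^ 2)) := tendsto_const_nhds
      have hbig := (hconst.mul hF).div (tendsto_gg.mul (hg2.pow 3)) (by norm_num)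
      convert hbig using 2
      · exact rfl
      have hcne : c ≠ 0 := ne_of_gt hc
      field_simp
      ring
    refine hR.congr' ?_
    filter_upwards [self_mem_nhdsWithin] with s (hs : 0 < s)
    have h1 : (0:ℝ) < 1 - Real.exp (-s) := by
      have := Real.exp_lt_one_iff.mpr (neg_lt_zero.mpr hs); linarith
    have h2 : (0:ℝ) < 1 - Real.exp (-(c * s)) := by
      have := Real.exp_lt_one_iff.mpr (neg_lt_zero.mpr (mul_pos hc hs)); linarith
    have hcne : c ≠ 0 := ne_of_gt hc
    simp only [hFdef, hh, gg]
    field_simp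
    ring
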